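/- Let λ = (5 − 2√2)/4. Then λ < 1 and for every 2×2 complex matrix B, (1/2)‖B(3) − I_2 ⊗ B(2)‖_2^2 ≤ λ ‖B(2) − I_2 ⊗ B‖_2^2. -/

import Mathlib

open Matrix
open scoped Kronecker

noncomputable section

/-- Cast a square matrix along an equality of sizes. -/
def mcast {m n : ℕ} (h : m = n) (A : Matrix (Fin m) (Fin m) ℂ) :
    Matrix (Fin n) (Fin n) ℂ :=
  Matrix.reindex (finCongr h) (finCongr h) A

/-- `A ⊗ I₂` in the paper's convention, i.e. the block-diagonal matrix `diag(A, A)`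
(used for the recursion `W_{n+1} = Wₙ ⊗ I₂ = diag(Wₙ, Wₙ)`). -/
def blockDup {m : ℕ} (A : Matrix (Fin m) (Fin m) ℂ) :
    Matrix (Fin (2 * m)) (Fin (2 * m)) ℂ :=
  Matrix.reindex finProdFinEquiv finProdFinEquiv
    ((1 : Matrix (Fin 2) (Fin 2) ℂ) ⊗ₖ A)

/-- `I₂ ⊗ A` in the paper's convention: each entry `a_{ij}` is placed at the (1-based)
positions `(2i−1, 2j−1)` and `(2i, 2j)`.  This is the coherent embedding
`φ(A) = I₂ ⊗ A` of the paper, for which `e_{ij} ↦ e_{2i−1,2j−1} + e_{2i,2j}`. -/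
def entryDup {m : ℕ} (A : Matrix (Fin m) (Fin m) ℂ) :
    Matrix (Fin (m * 2)) (Fin (m * 2)) ℂ :=
  Matrix.reindex finProdFinEquiv finProdFinEquiv
    (A ⊗ₖ (1 : Matrix (Fin 2) (Fin 2) ℂ))

/-- The 4 × 4 matrix `W₁`. -/
def W1 : Matrix (Fin 4) (Fin 4) ℂ :=
  !![1, 0, 0, 0;
     0, (Real.sqrt 2 : ℂ)⁻¹, -(Real.sqrt 2 : ℂ)⁻¹, 0;
     0, (Real.sqrt 2 : ℂ)⁻¹, (Real.sqrt 2 : ℂ)⁻¹, 0;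
     0, 0, 0, 1]

/-- The sequence `Wₙ ∈ M_{2^{n+1}}(ℂ)`, with `W_{n+1} = Wₙ ⊗ I₂ = diag(Wₙ, Wₙ)`.
(The value at `0` is irrelevant; all statements only involve `n ≥ 1`.) -/
def Wmat : (n : ℕ) → Matrix (Fin (2 ^ (n + 1))) (Fin (2 ^ (n + 1))) ℂ
  | 0 => 1
  | 1 => mcast (by norm_num) W1
  | (n + 2) => mcast (by ring) (blockDup (Wmat (n + 1)))

/-- `iterA k A n` is the matrix `A(n+1) ∈ M_{2^{k+n}}(ℂ)` of the paper:
`A(1) = A`, `A(n+1) = W_{k+n-1} (I₂ ⊗ A(n)) W_{k+n-1}^*`. -/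
def iterA (k : ℕ) (A : Matrix (Fin (2 ^ k)) (Fin (2 ^ k)) ℂ) :
    (n : ℕ) → Matrix (Fin (2 ^ (k + n))) (Fin (2 ^ (k + n))) ℂ
  | 0 => A
  | (n + 1) => Wmat (k + n) * mcast (by ring) (entryDup (iterA k A n)) * (Wmat (k + n))ᴴ

/-- Squared Frobenius (Hilbert–Schmidt) norm. -/
def frobSq {m n : ℕ} (A : Matrix (Fin m) (Fin n) ℂ) : ℝ :=
  ∑ i, ∑ j, ‖A i j‖ ^ 2

/-- `diffA k A n = A(n+2) - I₂ ⊗ A(n+1)` in the paper's numbering. -/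
def diffA (k : ℕ) (A : Matrix (Fin (2 ^ k)) (Fin (2 ^ k)) ℂ) (n : ℕ) :
    Matrix (Fin (2 ^ (k + n + 1))) (Fin (2 ^ (k + n + 1))) ℂ :=
  iterA k A (n + 1) - mcast (by ring) (entryDup (iterA k A n))

/-- The diagonal compression `E_{D(m)}`. -/
def diagComp {m : ℕ} (A : Matrix (Fin m) (Fin m) ℂ) : Matrix (Fin m) (Fin m) ℂ :=
  Matrix.diagonal (fun i => A i i)

/-- With `λ = (5 − 2√2)/4` one has `λ < 1` and, for every `B ∈ M₂(ℂ)`,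
`(1/2)‖B(3) − I₂ ⊗ B(2)‖₂² ≤ λ ‖B(2) − I₂ ⊗ B‖₂²`.
Here `B(3) - I₂ ⊗ B(2) = diffA 1 B' 1` and `B(2) - I₂ ⊗ B = diffA 1 B' 0`. -/

-- infrastructure
lemma cons_mk_zero'' {α : Type*} {n} (a : α) (s : Fin n → α) (h : 0 < n+1) :
    vecCons a s ⟨0, h⟩ = a := rfl
lemma cons_mk_succ' {α : Type*} {n} (a : α) (s : Fin n → α) (v : ℕ) (h) :
    vecCons a s ⟨v+1, h⟩ = s ⟨v, by omega⟩ := rfl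
lemma mcast_mk {m n : ℕ} (h : m = n) (A : Matrix (Fin m) (Fin m) ℂ) (v w : ℕ) (hv hw) :
    mcast h A ⟨v, hv⟩ ⟨w, hw⟩ = A ⟨v, by omega⟩ ⟨w, by omega⟩ := rfl
lemma entryDup_mk {m : ℕ} (A : Matrix (Fin m) (Fin m) ℂ) (v w : ℕ) (hv hw) :
    entryDup A ⟨v, hv⟩ ⟨w, hw⟩ =
      if v % 2 = w % 2 then A ⟨v / 2, by omega⟩ ⟨w / 2, by omega⟩ else 0 := by
  show (A ⊗ₖ (1 : Matrix (Fin 2) (Fin 2) ℂ)) _ _ = _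
  rw [Matrix.kroneckerMap_apply, Matrix.one_apply]
  have : ((finProdFinEquiv.symm (⟨v, hv⟩ : Fin (m*2))).2 = (finProdFinEquiv.symm (⟨w, hw⟩ : Fin (m*2))).2)
      ↔ (v % 2 = w % 2) := by
    constructor
    · intro h; exact congrArg Fin.val h
    · intro h; exact Fin.ext h
  split
  · rename_i hc
    rw [if_pos (this.mp hc), mul_one]; rfl
  · rename_i hc
    rw [if_neg (fun hh => hc (this.mpr hh)), mul_zero]
lemma blockDup_mk {m : ℕ} (A : Matrix (Fin m) (Fin m) ℂ) (v w : ℕ) (hv hw) :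
    blockDup A ⟨v, hv⟩ ⟨w, hw⟩ =
      if v / m = w / m then A ⟨v % m, Nat.mod_lt _ (by omega)⟩ ⟨w % m, Nat.mod_lt _ (by omega)⟩ else 0 := by
  show ((1 : Matrix (Fin 2) (Fin 2) ℂ) ⊗ₖ A) _ _ = _
  rw [Matrix.kroneckerMap_apply, Matrix.one_apply]
  have : ((finProdFinEquiv.symm (⟨v, hv⟩ : Fin (2*m))).1 = (finProdFinEquiv.symm (⟨w, hw⟩ : Fin (2*m))).1)
      ↔ (v / m = w / m) := by
    constructor
    · intro h; exact congrArg Fin.val h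
    · intro h; exact Fin.ext h
  split
  · rename_i hc
    rw [if_pos (this.mp hc), one_mul]; rfl
  · rename_i hc
    rw [if_neg (fun hh => hc (this.mpr hh)), zero_mul]
lemma sum4 {M : Type*} [AddCommMonoid M] {n : ℕ} (f : Fin n → M) (h : n = 4) :
    ∑ i, f i = f ⟨0, by omega⟩ + f ⟨1, by omega⟩ + f ⟨2, by omega⟩ + f ⟨3, by omega⟩ := by
  subst h; exact Fin.sum_univ_four f
lemma sum8 {M : Type*} [AddCommMonoid M] {n : ℕ} (f : Fin n → M) (h : n = 8) :
    ∑ i, f i = f ⟨0, by omega⟩ + f ⟨1, by omega⟩ + f ⟨2, by omega⟩ + f ⟨3, by omega⟩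
      + f ⟨4, by omega⟩ + f ⟨5, by omega⟩ + f ⟨6, by omega⟩ + f ⟨7, by omega⟩ := by
  subst h; exact Fin.sum_univ_eight f
lemma frobSq_mcast {m n : ℕ} (h : m = n) (A : Matrix (Fin m) (Fin m) ℂ) :
    frobSq (mcast h A) = frobSq A := by
  subst h
  simp [frobSq, mcast]
lemma hxS : ((Real.sqrt 2 : ℝ) : ℂ)⁻¹ = ((Real.sqrt 2 : ℝ) : ℂ) / 2 := by
  have h2 : ((Real.sqrt 2 : ℝ) : ℂ) ^ 2 = 2 := by
    norm_cast
    rw [Real.sq_sqrt]; norm_num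
  have h0 : ((Real.sqrt 2 : ℝ) : ℂ) ≠ 0 := by
    intro h
    rw [h] at h2; norm_num at h2
  field_simp
  linear_combination -h2
lemma hS2 : ((Real.sqrt 2 : ℝ) : ℂ) ^ 2 = 2 := by
  norm_cast
  rw [Real.sq_sqrt] <;> norm_num
lemma hS3 : ((Real.sqrt 2 : ℝ) : ℂ) ^ 3 = 2 * ((Real.sqrt 2 : ℝ) : ℂ) := by
  linear_combination ((Real.sqrt 2 : ℝ) : ℂ) * hS2
lemma hS4 : ((Real.sqrt 2 : ℝ) : ℂ) ^ 4 = 4 := by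
  linear_combination (((Real.sqrt 2 : ℝ) : ℂ) ^ 2 + 2) * hS2
lemma habs (r : ℝ) (z : ℂ) : ‖(r : ℂ) * z‖ ^ 2 = r ^ 2 * ‖z‖ ^ 2 := by
  rw [norm_mul, mul_pow, Complex.norm_real, Real.norm_eq_abs, sq_abs]

noncomputable def A1ex (B : Matrix (Fin 2) (Fin 2) ℂ) : Matrix (Fin 4) (Fin 4) ℂ :=
  !![((1 + 0 * Real.sqrt 2 : ℝ) : ℂ) * B ⟨0, by norm_num⟩ ⟨0, by norm_num⟩,
     ((0 + (-1/2) * Real.sqrt 2 : ℝ) : ℂ) * B ⟨0, by norm_num⟩ ⟨1, by norm_num⟩,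
     ((0 + (1/2) * Real.sqrt 2 : ℝ) : ℂ) * B ⟨0, by norm_num⟩ ⟨1, by norm_num⟩,
     0;
    ((0 + (-1/2) * Real.sqrt 2 : ℝ) : ℂ) * B ⟨1, by norm_num⟩ ⟨0, by norm_num⟩,
     (((1/2) + 0 * Real.sqrt 2 : ℝ) : ℂ) * B ⟨0, by norm_num⟩ ⟨0, by norm_num⟩ + (((1/2) + 0 * Real.sqrt 2 : ℝ) : ℂ) * B ⟨1, by norm_num⟩ ⟨1, by norm_num⟩,
     (((1/2) + 0 * Real.sqrt 2 : ℝ) : ℂ) * B ⟨0, by norm_num⟩ ⟨0, by norm_num⟩ + (((-1/2) + 0 * Real.sqrt 2 : ℝ) : ℂ) * B ⟨1, by norm_num⟩ ⟨1, by norm_num⟩,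
     ((0 + (1/2) * Real.sqrt 2 : ℝ) : ℂ) * B ⟨0, by norm_num⟩ ⟨1, by norm_num⟩;
    ((0 + (1/2) * Real.sqrt 2 : ℝ) : ℂ) * B ⟨1, by norm_num⟩ ⟨0, by norm_num⟩,
     (((1/2) + 0 * Real.sqrt 2 : ℝ) : ℂ) * B ⟨0, by norm_num⟩ ⟨0, by norm_num⟩ + (((-1/2) + 0 * Real.sqrt 2 : ℝ) : ℂ) * B ⟨1, by norm_num⟩ ⟨1, by norm_num⟩,
     (((1/2) + 0 * Real.sqrt 2 : ℝ) : ℂ) * B ⟨0, by norm_num⟩ ⟨0, by norm_num⟩ + (((1/2) + 0 * Real.sqrt 2 : ℝ) : ℂ) * B ⟨1, by norm_num⟩ ⟨1, by norm_num⟩,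
     ((0 + (1/2) * Real.sqrt 2 : ℝ) : ℂ) * B ⟨0, by norm_num⟩ ⟨1, by norm_num⟩;
    0,
     ((0 + (1/2) * Real.sqrt 2 : ℝ) : ℂ) * B ⟨1, by norm_num⟩ ⟨0, by norm_num⟩,
     ((0 + (1/2) * Real.sqrt 2 : ℝ) : ℂ) * B ⟨1, by norm_num⟩ ⟨0, by norm_num⟩,
     ((1 + 0 * Real.sqrt 2 : ℝ) : ℂ) * B ⟨1, by norm_num⟩ ⟨1, by norm_num⟩]

noncomputable def D0ex (B : Matrix (Fin 2) (Fin 2) ℂ) : Matrix (Fin 4) (Fin 4) ℂ :=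
  !![0,
     ((0 + (-1/2) * Real.sqrt 2 : ℝ) : ℂ) * B ⟨0, by norm_num⟩ ⟨1, by norm_num⟩,
     ((-1 + (1/2) * Real.sqrt 2 : ℝ) : ℂ) * B ⟨0, by norm_num⟩ ⟨1, by norm_num⟩,
     0;
    ((0 + (-1/2) * Real.sqrt 2 : ℝ) : ℂ) * B ⟨1, by norm_num⟩ ⟨0, by norm_num⟩,
     (((-1/2) + 0 * Real.sqrt 2 : ℝ) : ℂ) * (B ⟨0, by norm_num⟩ ⟨0, by norm_num⟩ - B ⟨1, by norm_num⟩ ⟨1, by norm_num⟩),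
     (((1/2) + 0 * Real.sqrt 2 : ℝ) : ℂ) * (B ⟨0, by norm_num⟩ ⟨0, by norm_num⟩ - B ⟨1, by norm_num⟩ ⟨1, by norm_num⟩),
     ((-1 + (1/2) * Real.sqrt 2 : ℝ) : ℂ) * B ⟨0, by norm_num⟩ ⟨1, by norm_num⟩;
    ((-1 + (1/2) * Real.sqrt 2 : ℝ) : ℂ) * B ⟨1, by norm_num⟩ ⟨0, by norm_num⟩,
     (((1/2) + 0 * Real.sqrt 2 : ℝ) : ℂ) * (B ⟨0, by norm_num⟩ ⟨0, by norm_num⟩ - B ⟨1, by norm_num⟩ ⟨1, by norm_num⟩),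
     (((1/2) + 0 * Real.sqrt 2 : ℝ) : ℂ) * (B ⟨0, by norm_num⟩ ⟨0, by norm_num⟩ - B ⟨1, by norm_num⟩ ⟨1, by norm_num⟩),
     ((0 + (1/2) * Real.sqrt 2 : ℝ) : ℂ) * B ⟨0, by norm_num⟩ ⟨1, by norm_num⟩;
    0,
     ((-1 + (1/2) * Real.sqrt 2 : ℝ) : ℂ) * B ⟨1, by norm_num⟩ ⟨0, by norm_num⟩,
     ((0 + (1/2) * Real.sqrt 2 : ℝ) : ℂ) * B ⟨1, by norm_num⟩ ⟨0, by norm_num⟩,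
     0]

noncomputable def D1ex (B : Matrix (Fin 2) (Fin 2) ℂ) : Matrix (Fin 8) (Fin 8) ℂ :=
  !![0,
     (((1/2) + 0 * Real.sqrt 2 : ℝ) : ℂ) * B ⟨0, by norm_num⟩ ⟨1, by norm_num⟩,
     (((-1/2) + (1/2) * Real.sqrt 2 : ℝ) : ℂ) * B ⟨0, by norm_num⟩ ⟨1, by norm_num⟩,
     0,
     0,
     0,
     0,
     0;
    (((1/2) + 0 * Real.sqrt 2 : ℝ) : ℂ) * B ⟨1, by norm_num⟩ ⟨0, by norm_num⟩,
     (((-1/4) + 0 * Real.sqrt 2 : ℝ) : ℂ) * (B ⟨0, by norm_num⟩ ⟨0, by norm_num⟩ - B ⟨1, by norm_num⟩ ⟨1, by norm_num⟩),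
     (((1/4) + 0 * Real.sqrt 2 : ℝ) : ℂ) * (B ⟨0, by norm_num⟩ ⟨0, by norm_num⟩ - B ⟨1, by norm_num⟩ ⟨1, by norm_num⟩),
     (((-1/2) + (1/2) * Real.sqrt 2 : ℝ) : ℂ) * B ⟨0, by norm_num⟩ ⟨1, by norm_num⟩,
     ((0 + (-1/4) * Real.sqrt 2 : ℝ) : ℂ) * (B ⟨0, by norm_num⟩ ⟨0, by norm_num⟩ - B ⟨1, by norm_num⟩ ⟨1, by norm_num⟩),
     0,
     0,
     0;
    (((-1/2) + (1/2) * Real.sqrt 2 : ℝ) : ℂ) * B ⟨1, by norm_num⟩ ⟨0, by norm_num⟩,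
     (((1/4) + 0 * Real.sqrt 2 : ℝ) : ℂ) * (B ⟨0, by norm_num⟩ ⟨0, by norm_num⟩ - B ⟨1, by norm_num⟩ ⟨1, by norm_num⟩),
     (((1/4) + 0 * Real.sqrt 2 : ℝ) : ℂ) * (B ⟨0, by norm_num⟩ ⟨0, by norm_num⟩ - B ⟨1, by norm_num⟩ ⟨1, by norm_num⟩),
     (((-1/2) + 0 * Real.sqrt 2 : ℝ) : ℂ) * B ⟨0, by norm_num⟩ ⟨1, by norm_num⟩,
     (((-1/2) + (1/4) * Real.sqrt 2 : ℝ) : ℂ) * (B ⟨0, by norm_num⟩ ⟨0, by norm_num⟩ - B ⟨1, by norm_num⟩ ⟨1, by norm_num⟩),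
     0,
     0,
     0;
    0,
     (((-1/2) + (1/2) * Real.sqrt 2 : ℝ) : ℂ) * B ⟨1, by norm_num⟩ ⟨0, by norm_num⟩,
     (((-1/2) + 0 * Real.sqrt 2 : ℝ) : ℂ) * B ⟨1, by norm_num⟩ ⟨0, by norm_num⟩,
     0,
     0,
     (((-1/2) + (1/4) * Real.sqrt 2 : ℝ) : ℂ) * (B ⟨0, by norm_num⟩ ⟨0, by norm_num⟩ - B ⟨1, by norm_num⟩ ⟨1, by norm_num⟩),
     ((0 + (1/4) * Real.sqrt 2 : ℝ) : ℂ) * (B ⟨0, by norm_num⟩ ⟨0, by norm_num⟩ - B ⟨1, by norm_num⟩ ⟨1, by norm_num⟩),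
     0;
    0,
     ((0 + (-1/4) * Real.sqrt 2 : ℝ) : ℂ) * (B ⟨0, by norm_num⟩ ⟨0, by norm_num⟩ - B ⟨1, by norm_num⟩ ⟨1, by norm_num⟩),
     (((-1/2) + (1/4) * Real.sqrt 2 : ℝ) : ℂ) * (B ⟨0, by norm_num⟩ ⟨0, by norm_num⟩ - B ⟨1, by norm_num⟩ ⟨1, by norm_num⟩),
     0,
     0,
     (((-1/2) + 0 * Real.sqrt 2 : ℝ) : ℂ) * B ⟨0, by norm_num⟩ ⟨1, by norm_num⟩,
     (((1/2) + (-1/2) * Real.sqrt 2 : ℝ) : ℂ) * B ⟨0, by norm_num⟩ ⟨1, by norm_num⟩,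
     0;
    0,
     0,
     0,
     (((-1/2) + (1/4) * Real.sqrt 2 : ℝ) : ℂ) * (B ⟨0, by norm_num⟩ ⟨0, by norm_num⟩ - B ⟨1, by norm_num⟩ ⟨1, by norm_num⟩),
     (((-1/2) + 0 * Real.sqrt 2 : ℝ) : ℂ) * B ⟨1, by norm_num⟩ ⟨0, by norm_num⟩,
     (((-1/4) + 0 * Real.sqrt 2 : ℝ) : ℂ) * (B ⟨0, by norm_num⟩ ⟨0, by norm_num⟩ - B ⟨1, by norm_num⟩ ⟨1, by norm_num⟩),
     (((1/4) + 0 * Real.sqrt 2 : ℝ) : ℂ) * (B ⟨0, by norm_num⟩ ⟨0, by norm_num⟩ - B ⟨1, by norm_num⟩ ⟨1, by norm_num⟩),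
     (((1/2) + (-1/2) * Real.sqrt 2 : ℝ) : ℂ) * B ⟨0, by norm_num⟩ ⟨1, by norm_num⟩;
    0,
     0,
     0,
     ((0 + (1/4) * Real.sqrt 2 : ℝ) : ℂ) * (B ⟨0, by norm_num⟩ ⟨0, by norm_num⟩ - B ⟨1, by norm_num⟩ ⟨1, by norm_num⟩),
     (((1/2) + (-1/2) * Real.sqrt 2 : ℝ) : ℂ) * B ⟨1, by norm_num⟩ ⟨0, by norm_num⟩,
     (((1/4) + 0 * Real.sqrt 2 : ℝ) : ℂ) * (B ⟨0, by norm_num⟩ ⟨0, by norm_num⟩ - B ⟨1, by norm_num⟩ ⟨1, by norm_num⟩),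
     (((1/4) + 0 * Real.sqrt 2 : ℝ) : ℂ) * (B ⟨0, by norm_num⟩ ⟨0, by norm_num⟩ - B ⟨1, by norm_num⟩ ⟨1, by norm_num⟩),
     (((1/2) + 0 * Real.sqrt 2 : ℝ) : ℂ) * B ⟨0, by norm_num⟩ ⟨1, by norm_num⟩;
    0,
     0,
     0,
     0,
     0,
     (((1/2) + (-1/2) * Real.sqrt 2 : ℝ) : ℂ) * B ⟨1, by norm_num⟩ ⟨0, by norm_num⟩,
     (((1/2) + 0 * Real.sqrt 2 : ℝ) : ℂ) * B ⟨1, by norm_num⟩ ⟨0, by norm_num⟩,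
     0]

set_option maxHeartbeats 4000000

lemma E1 (B : Matrix (Fin 2) (Fin 2) ℂ) :
    iterA 1 (mcast (by norm_num) B) 1 = mcast (by norm_num) (A1ex B) := by
  ext i j
  fin_cases i <;> fin_cases j <;>
    simp only [iterA, Wmat, A1ex, Matrix.mul_apply, Matrix.conjTranspose_apply,
      mcast_mk, entryDup_mk, blockDup_mk, sum4, sum8, W1,
      Complex.star_def, map_inv₀, Complex.conj_ofReal, _root_.map_zero, _root_.map_one, map_neg,
      Matrix.of_apply, cons_mk_zero'', cons_mk_succ',
      reduceIte, Nat.reduceAdd, Nat.reduceMul, Nat.reduceDiv, Nat.reduceMod,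
      Nat.reducePow, Nat.reduceEqDiff,
      mul_zero, zero_mul, mul_one, one_mul, add_zero, zero_add, neg_mul, mul_neg,
      neg_neg, star_zero, star_one]
  all_goals try simp only [hxS]
  all_goals push_cast
  all_goals ring_nf
  all_goals try simp only [hS2, hS3, hS4]
  all_goals try ring

lemma hDM0 (B : Matrix (Fin 2) (Fin 2) ℂ) :
    diffA 1 (mcast (by norm_num) B) 0 = mcast (by norm_num) (D0ex B) := by
  ext i j
  fin_cases i <;> fin_cases j <;>
    simp only [diffA, iterA, Wmat, D0ex, Matrix.mul_apply, Matrix.sub_apply,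
      Matrix.conjTranspose_apply,
      mcast_mk, entryDup_mk, blockDup_mk, sum4, sum8, W1,
      Complex.star_def, map_inv₀, Complex.conj_ofReal, _root_.map_zero, _root_.map_one, map_neg,
      Matrix.of_apply, cons_mk_zero'', cons_mk_succ',
      reduceIte, Nat.reduceAdd, Nat.reduceMul, Nat.reduceDiv, Nat.reduceMod,
      Nat.reducePow, Nat.reduceEqDiff,
      mul_zero, zero_mul, mul_one, one_mul, add_zero, zero_add, neg_mul, mul_neg,
      neg_neg, star_zero, star_one]
  all_goals try simp only [hxS]
  all_goals push_cast
  all_goals ring_nf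
  all_goals try simp only [hS2, hS3, hS4]
  all_goals try ring

lemma main1 (B : Matrix (Fin 2) (Fin 2) ℂ) :
    Wmat 2 * mcast (by norm_num) (entryDup (mcast (by norm_num : (4:ℕ) = 2^(1+1)) (A1ex B))) * (Wmat 2)ᴴ
      - mcast (by norm_num) (entryDup (mcast (by norm_num : (4:ℕ) = 2^(1+1)) (A1ex B)))
    = mcast (by norm_num : (8:ℕ) = 2^(1+1+1)) (D1ex B) := by
  ext i j
  fin_cases i <;> fin_cases j <;>
    simp only [Wmat, A1ex, D1ex, Matrix.mul_apply, Matrix.sub_apply,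
      Matrix.conjTranspose_apply,
      mcast_mk, entryDup_mk, blockDup_mk, sum4, sum8, W1,
      Complex.star_def, map_inv₀, Complex.conj_ofReal, _root_.map_zero, _root_.map_one, map_neg,
      Matrix.of_apply, cons_mk_zero'', cons_mk_succ',
      reduceIte, Nat.reduceAdd, Nat.reduceMul, Nat.reduceDiv, Nat.reduceMod,
      Nat.reducePow, Nat.reduceEqDiff,
      mul_zero, zero_mul, mul_one, one_mul, add_zero, zero_add, neg_mul, mul_neg,
      neg_neg, star_zero, star_one]
  all_goals try simp only [hxS]
  all_goals push_cast
  all_goals ring_nf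
  all_goals try simp only [hS2, hS3, hS4]
  all_goals try ring

lemma hr2 : Real.sqrt 2 ^ 2 = 2 := Real.sq_sqrt (by norm_num)

lemma hD0val (B : Matrix (Fin 2) (Fin 2) ℂ) :
    frobSq (D0ex B) =
      (4 - 2 * Real.sqrt 2) *
        (‖B ⟨0, by norm_num⟩ ⟨1, by norm_num⟩‖ ^ 2
          + ‖B ⟨1, by norm_num⟩ ⟨0, by norm_num⟩‖ ^ 2)
      + ‖B ⟨0, by norm_num⟩ ⟨0, by norm_num⟩ - B ⟨1, by norm_num⟩ ⟨1, by norm_num⟩‖ ^ 2 := by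
  simp only [frobSq, D0ex, sum4, sum8, Matrix.of_apply, cons_mk_zero'', cons_mk_succ', habs,
    _root_.map_zero, norm_zero, Nat.reduceAdd, Nat.reduceMul, Nat.reducePow]
  ring_nf
  simp only [hr2]
  ring

lemma hD1val (B : Matrix (Fin 2) (Fin 2) ℂ) :
    frobSq (D1ex B) =
      (4 - 2 * Real.sqrt 2) *
        (‖B ⟨0, by norm_num⟩ ⟨1, by norm_num⟩‖ ^ 2
          + ‖B ⟨1, by norm_num⟩ ⟨0, by norm_num⟩‖ ^ 2)
      + (5/2 - Real.sqrt 2) *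
        ‖B ⟨0, by norm_num⟩ ⟨0, by norm_num⟩ - B ⟨1, by norm_num⟩ ⟨1, by norm_num⟩‖ ^ 2 := by
  simp only [frobSq, D1ex, sum4, sum8, Matrix.of_apply, cons_mk_zero'', cons_mk_succ', habs,
    _root_.map_zero, norm_zero, Nat.reduceAdd, Nat.reduceMul, Nat.reducePow]
  ring_nf
  simp only [hr2]
  ring

theorem stmt_3 :
    (5 - 2 * Real.sqrt 2) / 4 < 1 ∧
      ∀ B : Matrix (Fin 2) (Fin 2) ℂ,
        (1 / 2 : ℝ) * frobSq (diffA 1 (mcast (by norm_num) B) 1) ≤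
          (5 - 2 * Real.sqrt 2) / 4 * frobSq (diffA 1 (mcast (by norm_num) B) 0) := by
  constructor
  · nlinarith [hr2, Real.sqrt_nonneg 2]
  intro B
  have hstep : diffA 1 (mcast (by norm_num) B) 1 =
      Wmat 2 * mcast (by norm_num) (entryDup (iterA 1 (mcast (by norm_num) B) 1)) * (Wmat 2)ᴴ
        - mcast (by norm_num) (entryDup (iterA 1 (mcast (by norm_num) B) 1)) := rfl
  have hD1 : diffA 1 (mcast (by norm_num) B) 1 = mcast (by norm_num : (8:ℕ) = 2^(1+1+1)) (D1ex B) := by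
    rw [hstep, E1]
    exact main1 B
  rw [hD1, hDM0 B, frobSq_mcast, frobSq_mcast, hD0val, hD1val]
  have hsu : Real.sqrt 2 ≤ 1.4143 := by nlinarith [hr2, Real.sqrt_nonneg 2]
  have hXb : (0:ℝ) ≤ ‖B ⟨0, by norm_num⟩ ⟨1, by norm_num⟩‖ ^ 2 := by positivity
  have hXc : (0:ℝ) ≤ ‖B ⟨1, by norm_num⟩ ⟨0, by norm_num⟩‖ ^ 2 := by positivity
  have hQ : (0:ℝ) ≤ ‖B ⟨0, by norm_num⟩ ⟨0, by norm_num⟩ - B ⟨1, by norm_num⟩ ⟨1, by norm_num⟩‖ ^ 2 := by positivity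
  nlinarith [hr2, hsu, hXb, hXc, hQ, mul_nonneg hXb hQ, Real.sqrt_nonneg 2,
    mul_nonneg (by linarith : (0:ℝ) ≤ 1.4143 - Real.sqrt 2) hXb,
    mul_nonneg (by linarith : (0:ℝ) ≤ 1.4143 - Real.sqrt 2) hXc,
    mul_nonneg (by linarith : (0:ℝ) ≤ 1.4143 - Real.sqrt 2) hQ]
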